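/- arXiv:1105.5181 — 3 statements merged into one kernel-verified Lean document; each statement's English description precedes it below -/
import Mathlib

section
/- For vectors p ≠ 0 and η in ℝ^d and 0 < s < 1, one has (1/2)(|p+η|^(2s) + |p−η|^(2s)) − |p|^(2s) ≤ s·|p|^(2s−2)·|η|². -/
open Real

lemma tangent_rpow (s : ℝ) (hs0 : 0 < s) (hs1 : s < 1) {a x : ℝ} (ha : 0 < a) (hx : 0 ≤ x) :
    x ^ s ≤ a ^ s + s * a ^ (s - 1) * (x - a) := by
  have ht : (-1 : ℝ) ≤ x / a - 1 := by
    have : 0 ≤ x / a := div_nonneg hx ha.le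
    linarith
  have hb := rpow_one_add_le_one_add_mul_self ht hs0.le hs1.le
  rw [add_sub_cancel] at hb
  have hx' : x = a * (x / a) := by field_simp
  calc x ^ s = (a * (x / a)) ^ s := by rw [← hx']
    _ = a ^ s * (x / a) ^ s := Real.mul_rpow ha.le (div_nonneg hx ha.le)
    _ ≤ a ^ s * (1 + s * (x / a - 1)) := by
        exact mul_le_mul_of_nonneg_left hb (rpow_nonneg ha.le s)
    _ = a ^ s + s * a ^ (s - 1) * (x - a) := by
        rw [Real.rpow_sub ha, Real.rpow_one]
        field_simp

theorem parallelogram_rpow_bound' (d : ℕ) (s : ℝ) (hs0 : 0 < s) (hs1 : s < 1)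
    (p η : EuclideanSpace ℝ (Fin d)) (hp : p ≠ 0) :
    (1 / 2) * (‖p + η‖ ^ (2 * s) + ‖p - η‖ ^ (2 * s)) - ‖p‖ ^ (2 * s) ≤
      s * ‖p‖ ^ (2 * s - 2) * ‖η‖ ^ 2 := by
  have hpn : (0:ℝ) < ‖p‖ := norm_pos_iff.mpr hp
  have ha : (0:ℝ) < ‖p‖ ^ 2 := by positivity
  have key : ∀ x : EuclideanSpace ℝ (Fin d),
      ‖x‖ ^ (2 * s) ≤ (‖p‖^2) ^ s + s * (‖p‖^2) ^ (s - 1) * (‖x‖^2 - ‖p‖^2) := by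
    intro x
    have h1 : ‖x‖ ^ (2 * s) = (‖x‖ ^ 2 : ℝ) ^ s := by
      rw [← Real.rpow_natCast ‖x‖ 2, ← Real.rpow_mul (norm_nonneg x)]
      norm_num
    rw [h1]
    exact tangent_rpow s hs0 hs1 ha (by positivity)
  have hpar := parallelogram_law_with_norm ℝ p η
  have h2 : ‖p‖ ^ (2 * s) = (‖p‖ ^ 2 : ℝ) ^ s := by
    rw [← Real.rpow_natCast ‖p‖ 2, ← Real.rpow_mul (norm_nonneg p)]
    norm_num
  have h3 : ‖p‖ ^ (2 * s - 2) = (‖p‖ ^ 2 : ℝ) ^ (s - 1) := by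
    rw [← Real.rpow_natCast ‖p‖ 2, ← Real.rpow_mul (norm_nonneg p)]
    ring_nf
  have k1 := key (p + η)
  have k2 := key (p - η)
  have hsq : ‖p + η‖^2 + ‖p - η‖^2 = 2 * (‖p‖^2 + ‖η‖^2) := by
    have := hpar; nlinarith [this]
  rw [h2, h3]
  set c := s * (‖p‖ ^ 2) ^ (s - 1) with hc
  have hlin : c * (‖p + η‖ ^ 2 - ‖p‖ ^ 2) + c * (‖p - η‖ ^ 2 - ‖p‖ ^ 2) = 2 * c * ‖η‖ ^ 2 := by
    linear_combination c * hsq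
  linarith [k1, k2, hlin]
end

section
/- For all real numbers E > 0 and 0 < s < 1, one has the identity (E^s − 1)₋ = s(1−s)·∫₀¹ (E−τ)₋ · τ^(s−2) dτ + s·(E−1)₋, where x₋ = max{−x, 0} denotes the negative part. -/
open intervalIntegral Real MeasureTheory Set

theorem negpart_rpow_integral_identity (E s : ℝ) (hE : 0 < E)
    (hs0 : 0 < s) (hs1 : s < 1) :
    max (-(E ^ s - 1)) 0 =
      s * (1 - s) * (∫ τ in (0 : ℝ)..1, max (-(E - τ)) 0 * τ ^ (s - 2)) +
        s * max (-(E - 1)) 0 := by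
  rcases le_or_gt 1 E with h1 | h1
  · have hEs : (1:ℝ) ≤ E ^ s := Real.one_le_rpow h1 hs0.le
    have hI : (∫ τ in (0:ℝ)..1, max (-(E - τ)) 0 * τ ^ (s-2)) = 0 := by
      rw [intervalIntegral.integral_congr (g := fun _ => (0:ℝ))]
      · simp
      · intro τ hτ
        rw [Set.uIcc_of_le (by norm_num : (0:ℝ) ≤ 1)] at hτ
        have : (0:ℝ) ≤ E - τ := by linarith [hτ.2]
        show max (-(E - τ)) 0 * τ ^ (s-2) = 0
        rw [max_eq_right (neg_nonpos.mpr this), zero_mul]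
    have h2 : max (-(E^s-1)) 0 = 0 := by simp; linarith
    have h3 : max (-(E-1)) 0 = 0 := by simp; linarith
    rw [hI, h2, h3]; ring
  · have hEs : E ^ s < 1 := Real.rpow_lt_one hE.le h1 hs0
    have hE1 : E ≤ 1 := h1.le
    -- integrability on [0,E]
    have hint1 : IntervalIntegrable (fun τ => max (-(E - τ)) 0 * τ ^ (s-2)) volume 0 E := by
      apply (_root_.intervalIntegrable_const (c := (0:ℝ))).congr
      rw [Set.uIoc_of_le hE.le]
      intro τ hτ
      show (0:ℝ) = max (-(E - τ)) 0 * τ ^ (s-2)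
      have : (0:ℝ) ≤ E - τ := by linarith [hτ.2]
      rw [max_eq_right (neg_nonpos.mpr this), zero_mul]
    -- continuity/integrability on [E,1]
    have hcont : ContinuousOn (fun τ : ℝ => max (-(E - τ)) 0 * τ ^ (s-2)) (Set.uIcc E 1) := by
      apply ContinuousOn.mul
      · fun_prop
      · intro τ hτ
        rw [Set.uIcc_of_le hE1] at hτ
        exact (Real.continuousAt_rpow_const τ _ (Or.inl (lt_of_lt_of_le hE hτ.1).ne')).continuousWithinAt
    have hint2 : IntervalIntegrable (fun τ => max (-(E - τ)) 0 * τ ^ (s-2)) volume E 1 :=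
      hcont.intervalIntegrable
    have hsplit : (∫ τ in (0:ℝ)..1, max (-(E - τ)) 0 * τ ^ (s-2))
        = (∫ τ in (0:ℝ)..E, max (-(E-τ)) 0 * τ^(s-2)) + ∫ τ in E..1, max (-(E-τ)) 0 * τ^(s-2) :=
      (intervalIntegral.integral_add_adjacent_intervals hint1 hint2).symm
    have hI0 : (∫ τ in (0:ℝ)..E, max (-(E-τ)) 0 * τ^(s-2)) = 0 := by
      rw [intervalIntegral.integral_congr (g := fun _ => (0:ℝ))]
      · simp
      · intro τ hτ
        rw [Set.uIcc_of_le hE.le] at hτ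
        have : (0:ℝ) ≤ E - τ := by linarith [hτ.2]
        show max (-(E - τ)) 0 * τ ^ (s-2) = 0
        rw [max_eq_right (neg_nonpos.mpr this), zero_mul]
    have hI2 : (∫ τ in E..1, max (-(E-τ)) 0 * τ^(s-2))
        = ∫ τ in E..1, (τ^(s-1) - E * τ^(s-2)) := by
      apply intervalIntegral.integral_congr
      intro τ hτ
      rw [Set.uIcc_of_le hE1] at hτ
      have h0 : 0 < τ := lt_of_lt_of_le hE hτ.1
      have hm : max (-(E-τ)) 0 = τ - E := by
        rw [max_eq_left (by linarith [hτ.1])]; ring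
      have hr : τ ^ (s-1) = τ * τ^(s-2) := by
        rw [show s - 1 = 1 + (s-2) by ring, Real.rpow_add h0, Real.rpow_one]
      simp only [hm, hr]; ring
    have hIa : (∫ τ in E..1, τ^(s-1)) = (1 - E^s)/s := by
      rw [integral_rpow (Or.inl (by linarith))]
      have hss : s - 1 + 1 = s := by ring
      rw [hss, Real.one_rpow]
    have hIb : (∫ τ in E..1, E * τ^(s-2)) = E * ((1 - E^(s-1))/(s-1)) := by
      rw [intervalIntegral.integral_const_mul,
        integral_rpow (Or.inr ⟨by intro h; linarith, by
          rw [Set.uIcc_of_le hE1]; intro h; exact absurd h.1 (not_le.mpr hE)⟩)]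
      have hss : s - 2 + 1 = s - 1 := by ring
      rw [hss, Real.one_rpow]
    have hsub : (∫ τ in E..1, (τ^(s-1) - E * τ^(s-2)))
        = (∫ τ in E..1, τ^(s-1)) - ∫ τ in E..1, E * τ^(s-2) := by
      apply intervalIntegral.integral_sub
      · apply intervalIntegral.intervalIntegrable_rpow
        right; rw [Set.uIcc_of_le hE1]; intro h; exact absurd h.1 (not_le.mpr hE)
      · apply IntervalIntegrable.const_mul
        apply intervalIntegral.intervalIntegrable_rpow
        right; rw [Set.uIcc_of_le hE1]; intro h; exact absurd h.1 (not_le.mpr hE)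
    have hEE : E * E ^ (s-1) = E ^ s := by
      have h := Real.rpow_add hE 1 (s-1)
      rw [Real.rpow_one] at h
      rw [← h]; congr 1; ring
    have h2 : max (-(E^s-1)) 0 = 1 - E^s := by rw [max_eq_left (by linarith)]; ring
    have h3 : max (-(E-1)) 0 = 1 - E := by rw [max_eq_left (by linarith)]; ring
    rw [h2, h3, hsplit, hI0, hI2, hsub, hIa, hIb]
    have hB : E ^ (s-1) = E ^ s / E := by
      rw [eq_div_iff hE.ne']; linear_combination hEE
    have hs1' : s - 1 ≠ 0 := by intro h; linarith
    rw [hB]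
    field_simp
    ring
end

section
/- Let (λ_k)_{k∈ℕ} be a non-decreasing sequence of real numbers, A, C > 0, B, D ∈ ℝ, and real exponents a, b with −1 < a−1 < b < a, related by C = A^(−1/a)·a·(a+1)^(−(1+a)/a) and D = B·(A(a+1))^(−(1+b)/a). If ∑_{k=1}^N λ_k = A N^(a+1) + B N^(b+1)(1+o(1)) as N → ∞, then ∑_{k∈ℕ} (Λ − λ_k)₊ = C Λ^((1+a)/a) − D Λ^((1+b)/a)(1+o(1)) as Λ → ∞. -/
open Filter

section helpers
open Real

/-- Tangent-line lower bound for rpow: for `p ≥ 1`, `N > 0`, `x ≥ 0`: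
`N^p + p N^(p-1) (x - N) ≤ x^p`. -/
lemma rpow_tangent_le {p N x : ℝ} (hp : 1 ≤ p) (hN : 0 < N) (hx : 0 ≤ x) :
    N ^ p + p * N ^ (p - 1) * (x - N) ≤ x ^ p := by
  have hs : -1 ≤ x / N - 1 := by
    have : 0 ≤ x / N := div_nonneg hx hN.le
    linarith
  have h := one_add_mul_self_le_rpow_one_add hs hp
  have h1 : 1 + (x / N - 1) = x / N := by ring
  rw [h1] at h
  have h2 : (x / N) ^ p = x ^ p / N ^ p := Real.div_rpow hx hN.le p
  rw [h2] at h
  have hNp : 0 < N ^ p := Real.rpow_pos_of_pos hN p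
  have h3 := mul_le_mul_of_nonneg_left h hNp.le
  calc N ^ p + p * N ^ (p - 1) * (x - N)
      = N ^ p * (1 + p * (x / N - 1)) := by
        have : N ^ (p - 1) = N ^ p / N := by
          rw [Real.rpow_sub hN, Real.rpow_one]
        rw [this]; field_simp
    _ ≤ N ^ p * (x ^ p / N ^ p) := h3
    _ = x ^ p := by field_simp


lemma one_add_rpow_le_exp {u p : ℝ} (hu : 0 ≤ u) (hp : 0 ≤ p) :
    (1 + u) ^ p ≤ Real.exp (p * u) := by
  have h1 : (0:ℝ) < 1 + u := by linarith
  rw [Real.rpow_def_of_pos h1]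
  apply Real.exp_le_exp.2
  have := Real.log_le_sub_one_of_pos h1
  nlinarith [Real.log_le_sub_one_of_pos h1]

lemma exp_le_one_add_mul {v : ℝ} (hv : 0 ≤ v) : Real.exp v ≤ 1 + v * Real.exp v := by
  have h := Real.add_one_le_exp (-v)
  have he : 0 < Real.exp v := Real.exp_pos v
  have h2 : (-v + 1) * Real.exp v ≤ Real.exp (-v) * Real.exp v := by
    apply mul_le_mul_of_nonneg_right h he.le
  rw [← Real.exp_add, neg_add_cancel, Real.exp_zero] at h2
  nlinarith

lemma rpow_add_one_le {N θ p : ℝ} (hN : 1 ≤ N) (h0 : 0 ≤ θ) (h1 : θ ≤ 1) (hp : 0 < p) :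
    (N + θ) ^ p ≤ N ^ p + p * Real.exp p * N ^ (p - 1) := by
  have hN0 : (0:ℝ) < N := by linarith
  have hu0 : 0 ≤ θ / N := div_nonneg h0 hN0.le
  have hu1 : θ / N ≤ 1 := by rw [div_le_one hN0]; linarith
  have key : (1 + θ / N) ^ p ≤ 1 + p * Real.exp p * (θ / N) := by
    calc (1 + θ / N) ^ p ≤ Real.exp (p * (θ / N)) := one_add_rpow_le_exp hu0 hp.le
      _ ≤ 1 + (p * (θ / N)) * Real.exp (p * (θ / N)) :=
          exp_le_one_add_mul (by positivity)
      _ ≤ 1 + p * Real.exp p * (θ / N) := by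
          have : Real.exp (p * (θ / N)) ≤ Real.exp p := by
            apply Real.exp_le_exp.2; nlinarith
          have h3 : p * (θ / N) * Real.exp (p * (θ / N)) ≤ p * (θ / N) * Real.exp p := by
            apply mul_le_mul_of_nonneg_left this (by positivity)
          nlinarith [h3]
  have heq : (N + θ) ^ p = N ^ p * (1 + θ / N) ^ p := by
    rw [← Real.mul_rpow hN0.le (by positivity)]
    congr 1; field_simp
  rw [heq]
  have hNp : 0 < N ^ p := Real.rpow_pos_of_pos hN0 p
  calc N ^ p * (1 + θ / N) ^ p ≤ N ^ p * (1 + p * Real.exp p * (θ / N)) := by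
        apply mul_le_mul_of_nonneg_left key hNp.le
    _ = N ^ p + p * Real.exp p * θ * (N ^ p / N) := by field_simp
    _ = N ^ p + p * Real.exp p * θ * N ^ (p - 1) := by
        rw [Real.rpow_sub hN0, Real.rpow_one]
    _ ≤ N ^ p + p * Real.exp p * N ^ (p - 1) := by
        have : 0 ≤ N ^ (p-1) := (Real.rpow_pos_of_pos hN0 _).le
        have h4 : θ * N ^ (p-1) ≤ 1 * N ^ (p-1) := mul_le_mul_of_nonneg_right h1 this
        nlinarith [Real.exp_pos p, mul_le_mul_of_nonneg_left h4 (by positivity : (0:ℝ) ≤ p * Real.exp p)]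


lemma nat_rpow_tendsto_zero {c : ℝ} (hc : c < 0) :
    Tendsto (fun n : ℕ => (n : ℝ) ^ c) atTop (nhds 0) := by
  have h := tendsto_rpow_neg_atTop (neg_pos.2 hc)
  simp only [neg_neg] at h
  exact h.comp tendsto_natCast_atTop_atTop

lemma Sdiv_tendsto (lam : ℕ → ℝ) (A B a b : ℝ) (hba : b < a)
    (hyp : Tendsto
      (fun N : ℕ =>
        ((∑ k ∈ Finset.range N, lam k) - A * (N : ℝ) ^ (a + 1)) / (N : ℝ) ^ (b + 1))
      atTop (nhds B)) :
    Tendsto (fun n : ℕ => (∑ k ∈ Finset.range n, lam k) / (n : ℝ) ^ (a + 1))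
      atTop (nhds A) := by
  have h0 : Tendsto (fun n : ℕ =>
      ((∑ k ∈ Finset.range n, lam k) - A * (n : ℝ) ^ (a + 1)) / (n : ℝ) ^ (b + 1)
        * (n : ℝ) ^ (b - a) + A) atTop (nhds (B * 0 + A)) :=
    (hyp.mul (nat_rpow_tendsto_zero (by linarith))).add_const A
  rw [mul_zero, zero_add] at h0
  apply h0.congr'
  filter_upwards [eventually_ge_atTop 1] with n hn
  have hn0 : (0:ℝ) < (n:ℝ) := by exact_mod_cast hn
  have ha1 : (0:ℝ) < (n:ℝ) ^ (a+1) := Real.rpow_pos_of_pos hn0 _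
  have hba0 : (0:ℝ) < (n:ℝ) ^ (b-a) := Real.rpow_pos_of_pos hn0 _
  have hsplit : (n:ℝ) ^ (b+1) = (n:ℝ) ^ (a+1) * (n:ℝ) ^ (b-a) := by
    rw [← Real.rpow_add hn0]; ring_nf
  rw [hsplit]
  field_simp
  ring

set_option maxHeartbeats 1000000 in
lemma lam_ratio_tendsto (lam : ℕ → ℝ) (A B a b : ℝ) (hA : 0 < A) (ha0 : 0 < a)
    (hba : b < a) (hmono : Monotone lam)
    (hyp : Tendsto (fun N : ℕ =>
        ((∑ k ∈ Finset.range N, lam k) - A * (N : ℝ) ^ (a + 1)) / (N : ℝ) ^ (b + 1))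
      atTop (nhds B)) :
    Tendsto (fun n : ℕ => lam n / (n : ℝ) ^ a) atTop (nhds (A * (a + 1))) := by
  have hS := Sdiv_tendsto lam A B a b hba hyp
  set S : ℕ → ℝ := fun n => ∑ k ∈ Finset.range n, lam k with hSdef
  set L : ℝ := A * (a + 1) with hLdef
  set F : ℝ → ℝ := fun t => A * (1 + t) ^ (a + 1) with hFdef
  rw [Metric.tendsto_atTop]
  intro ε hε
  -- derivative of F at 0 is L
  have hf : HasDerivAt F L 0 := by
    have h1 : HasDerivAt (fun t : ℝ => 1 + t) 1 0 := (hasDerivAt_id 0).const_add 1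
    have h2 : HasDerivAt (fun x : ℝ => x ^ (a + 1)) ((a + 1) * (1:ℝ) ^ (a + 1 - 1)) (1 + 0) := by
      rw [add_zero]
      exact Real.hasDerivAt_rpow_const (Or.inl one_ne_zero)
    have h3 := (h2.comp 0 h1).const_mul A
    simpa [hLdef, Real.one_rpow, mul_comm, mul_assoc] using h3
  have hslope : Tendsto (slope F 0) (nhdsWithin 0 {(0:ℝ)}ᶜ) (nhds L) :=
    hasDerivAt_iff_tendsto_slope.1 hf
  have hmono' : nhdsWithin (0:ℝ) (Set.Ioi 0) ≤ nhdsWithin 0 {(0:ℝ)}ᶜ :=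
    nhdsWithin_mono 0 (fun x hx => ne_of_gt hx)
  have hneg : Tendsto (fun δ : ℝ => -δ) (nhdsWithin 0 (Set.Ioi 0)) (nhdsWithin 0 {(0:ℝ)}ᶜ) := by
    apply tendsto_nhdsWithin_of_tendsto_nhds_of_eventually_within
    · have : Tendsto (fun δ : ℝ => -δ) (nhds 0) (nhds 0) := by
        simpa using (continuous_neg.tendsto (0:ℝ))
      exact this.mono_left nhdsWithin_le_nhds
    · filter_upwards [eventually_mem_nhdsWithin] with x hx
      exact ne_of_lt (neg_neg_iff_pos.2 hx)
  have hev : ∀ᶠ δ in nhdsWithin (0:ℝ) (Set.Ioi 0),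
      |slope F 0 δ - L| < ε/2 ∧ |slope F 0 (-δ) - L| < ε/2 ∧ 0 < δ ∧ δ < 2⁻¹ := by
    have e1 : ∀ᶠ δ in nhdsWithin (0:ℝ) (Set.Ioi 0), |slope F 0 δ - L| < ε/2 := by
      have := (hslope.mono_left hmono')
      rw [Metric.tendsto_nhds] at this
      simpa [Real.dist_eq] using this (ε/2) (by linarith)
    have e2 : ∀ᶠ δ in nhdsWithin (0:ℝ) (Set.Ioi 0), |slope F 0 (-δ) - L| < ε/2 := by
      have := hslope.comp hneg
      rw [Metric.tendsto_nhds] at this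
      simpa [Real.dist_eq, Function.comp] using this (ε/2) (by linarith)
    have e3 : ∀ᶠ δ in nhdsWithin (0:ℝ) (Set.Ioi 0), 0 < δ := eventually_mem_nhdsWithin
    have e4 : ∀ᶠ δ in nhdsWithin (0:ℝ) (Set.Ioi 0), δ < 2⁻¹ :=
      eventually_nhdsWithin_of_eventually_nhds (gt_mem_nhds (by norm_num))
    filter_upwards [e1, e2, e3, e4] with δ h1 h2 h3 h4
    exact ⟨h1, h2, h3, h4⟩
  obtain ⟨δ, h1δ, h2δ, hδ0, hδhalf⟩ := hev.exists
  set k : ℕ → ℕ := fun n => ⌈δ * n⌉₊ with hkdef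
  have hkge : ∀ n : ℕ, δ * n ≤ k n := fun n => Nat.le_ceil _
  have hkle : ∀ n : ℕ, (k n : ℝ) ≤ δ * n + 1 := fun n =>
    (Nat.ceil_lt_add_one (by positivity)).le
  have hk1 : ∀ n : ℕ, 1 ≤ n → 1 ≤ k n := by
    intro n hn
    have hn' : (1:ℝ) ≤ (n:ℝ) := by exact_mod_cast hn
    exact Nat.ceil_pos.2 (by nlinarith)
  have hkn : Tendsto (fun n : ℕ => (k n : ℝ) / n) atTop (nhds δ) := by
    apply tendsto_of_tendsto_of_tendsto_of_le_of_le' (tendsto_const_nhds (x := δ))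
      (by simpa using (tendsto_const_nhds (x := δ)).add tendsto_one_div_atTop_nhds_zero_nat)
    · filter_upwards [eventually_ge_atTop 1] with n hn
      have hn0 : (0:ℝ) < (n:ℝ) := by exact_mod_cast hn
      rw [le_div_iff₀ hn0]
      exact hkge n
    · filter_upwards [eventually_ge_atTop 1] with n hn
      have hn0 : (0:ℝ) < (n:ℝ) := by exact_mod_cast hn
      rw [div_le_iff₀ hn0]
      calc (k n : ℝ) ≤ δ * n + 1 := hkle n
        _ = (δ + (n:ℝ)⁻¹) * n := by field_simp
  have t3 : Tendsto (fun n : ℕ => (n:ℝ) / (k n)) atTop (nhds δ⁻¹) := by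
    have := hkn.inv₀ (ne_of_gt hδ0)
    simpa [inv_div] using this
  -- upper bound
  set m : ℕ → ℕ := fun n => n + k n with hmdef
  have hmtop : Tendsto m atTop atTop :=
    tendsto_atTop_mono (fun n => Nat.le_add_right n (k n)) tendsto_id
  have hmn : Tendsto (fun n : ℕ => (m n : ℝ) / n) atTop (nhds (1 + δ)) := by
    apply ((tendsto_const_nhds (x := (1:ℝ))).add hkn).congr'
    filter_upwards [eventually_ge_atTop 1] with n hn
    have hn0 : (0:ℝ) < (n:ℝ) := by exact_mod_cast hn
    simp only [hmdef, Nat.cast_add]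
    field_simp
  set Q : ℕ → ℝ := fun n => (S (m n) - S n) / ((k n : ℝ) * (n:ℝ) ^ a) with hQdef
  have hQle : ∀ᶠ n in atTop, lam n / (n:ℝ) ^ a ≤ Q n := by
    filter_upwards [eventually_ge_atTop 1] with n hn
    have hn0 : (0:ℝ) < (n:ℝ) := by exact_mod_cast hn
    have hk0 : (0:ℝ) < (k n : ℝ) := by exact_mod_cast hk1 n hn
    have hsum : (k n : ℝ) * lam n ≤ S (m n) - S n := by
      have hcard : (Finset.Ico n (m n)).card = k n := by
        simp [hmdef]
      have h := Finset.card_nsmul_le_sum (Finset.Ico n (m n)) lam (lam n)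
        (fun i hi => hmono (Finset.mem_Ico.1 hi).1)
      rw [hcard, nsmul_eq_mul] at h
      rwa [Finset.sum_Ico_eq_sub lam (Nat.le_add_right n (k n))] at h
    have hpos : (0:ℝ) < (k n : ℝ) * (n:ℝ) ^ a := by positivity
    rw [hQdef, div_le_div_iff₀ (by positivity) hpos]
    have hna : (0:ℝ) < (n:ℝ) ^ a := by positivity
    nlinarith
  have hsv : slope F 0 δ = (A * (1 + δ) ^ (a+1) - A) * δ⁻¹ := by
    rw [slope_def_field]
    simp [hFdef, Real.one_rpow, div_eq_mul_inv]
  have hQlim : Tendsto Q atTop (nhds (slope F 0 δ)) := by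
    rw [hsv]
    have t1 : Tendsto (fun n : ℕ => S (m n) / (m n : ℝ) ^ (a+1)) atTop (nhds A) :=
      hS.comp hmtop
    have t2 : Tendsto (fun n : ℕ => ((m n : ℝ) / n) ^ (a+1)) atTop (nhds ((1+δ) ^ (a+1))) :=
      hmn.rpow_const (Or.inl (by positivity))
    have main := ((t1.mul t2).sub hS).mul t3
    apply main.congr'
    filter_upwards [eventually_ge_atTop 1] with n hn
    have hn0 : (0:ℝ) < (n:ℝ) := by exact_mod_cast hn
    have hm0 : (0:ℝ) < (m n : ℝ) := by
      have : 1 ≤ m n := le_trans hn (Nat.le_add_right n (k n))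
      exact_mod_cast Nat.lt_of_lt_of_le Nat.zero_lt_one this
    have hk0 : (0:ℝ) < (k n : ℝ) := by exact_mod_cast hk1 n hn
    have hdiv : ((m n : ℝ) / n) ^ (a+1) = (m n : ℝ) ^ (a+1) / (n:ℝ) ^ (a+1) :=
      Real.div_rpow hm0.le hn0.le _
    have hna1 : (n:ℝ) ^ (a+1) = (n:ℝ) ^ a * n := by
      rw [Real.rpow_add_one (ne_of_gt hn0)]
    rw [hdiv, hQdef]
    have hma : (0:ℝ) < (m n : ℝ) ^ (a+1) := by positivity
    have hna : (0:ℝ) < (n:ℝ) ^ a := by positivity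
    field_simp
    rw [hna1]
    ring
  have hupper : ∀ᶠ n in atTop, lam n / (n:ℝ) ^ a < L + ε := by
    have := hQlim
    rw [Metric.tendsto_atTop] at this
    obtain ⟨N₁, hN₁⟩ := this (ε/2) (by linarith)
    filter_upwards [hQle, eventually_ge_atTop N₁] with n h1 h2
    have := hN₁ n h2
    rw [Real.dist_eq, abs_sub_lt_iff] at this
    rw [abs_sub_lt_iff] at h1δ
    linarith [this.1, this.2, h1δ.1, h1δ.2, h1]
  -- lower bound
  set m' : ℕ → ℕ := fun n => n - k n with hm'def
  have h3 : Tendsto (fun n : ℕ => (1-δ) * (n:ℝ) - 1) atTop atTop := by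
    apply tendsto_atTop_add_const_right
    exact Tendsto.const_mul_atTop (by linarith) tendsto_natCast_atTop_atTop
  have Ev : ∀ᶠ n in atTop, k n < n ∧ (2:ℝ) ≤ (1-δ) * (n:ℝ) - 1 := by
    filter_upwards [h3.eventually_ge_atTop 2] with n hn
    refine ⟨?_, hn⟩
    have := hkle n
    have : (k n : ℝ) < (n : ℝ) := by nlinarith
    exact_mod_cast this
  have hm'cast : ∀ n : ℕ, k n < n → (m' n : ℝ) = (n:ℝ) - (k n : ℝ) := by
    intro n hlt
    simp only [hm'def]
    exact_mod_cast Nat.cast_sub (le_of_lt hlt)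
  have hm'ge : ∀ n : ℕ, k n < n → (1-δ) * (n:ℝ) - 1 ≤ (m' n : ℝ) := by
    intro n hlt
    rw [hm'cast n hlt]
    have := hkle n
    nlinarith
  have hm'n : Tendsto (fun n : ℕ => (m' n : ℝ) / n) atTop (nhds (1 - δ)) := by
    apply ((tendsto_const_nhds (x := (1:ℝ))).sub hkn).congr'
    filter_upwards [Ev, eventually_ge_atTop 1] with n hEv hn
    have hn0 : (0:ℝ) < (n:ℝ) := by exact_mod_cast hn
    rw [hm'cast n hEv.1]
    field_simp
  have hm'topR : Tendsto (fun n : ℕ => (m' n : ℝ)) atTop atTop := by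
    apply tendsto_atTop_mono' atTop _ h3
    filter_upwards [Ev] with n hEv
    exact hm'ge n hEv.1
  have hm'top : Tendsto m' atTop atTop := tendsto_natCast_atTop_iff.1 hm'topR
  set Q' : ℕ → ℝ := fun n => (S n - S (m' n)) / ((k n : ℝ) * (n:ℝ) ^ a) with hQ'def
  have hQ'ge : ∀ᶠ n in atTop, Q' n ≤ lam n / (n:ℝ) ^ a := by
    filter_upwards [Ev, eventually_ge_atTop 1] with n hEv hn
    have hn0 : (0:ℝ) < (n:ℝ) := by exact_mod_cast hn
    have hk0 : (0:ℝ) < (k n : ℝ) := by exact_mod_cast hk1 n hn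
    have hsum : S n - S (m' n) ≤ (k n : ℝ) * lam n := by
      have hcard : (Finset.Ico (m' n) n).card = k n := by
        simp only [Nat.card_Ico, hm'def]
        exact Nat.sub_sub_self (le_of_lt hEv.1)
      have h := Finset.sum_le_card_nsmul (Finset.Ico (m' n) n) lam (lam n)
        (fun i hi => hmono (le_of_lt (Finset.mem_Ico.1 hi).2))
      rw [hcard, nsmul_eq_mul] at h
      rwa [Finset.sum_Ico_eq_sub lam (Nat.sub_le n (k n))] at h
    have hna : (0:ℝ) < (n:ℝ) ^ a := by positivity
    rw [hQ'def, div_le_div_iff₀ (by positivity) (by positivity)]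
    nlinarith
  have hδ1 : (0:ℝ) < 1 - δ := by
    have : (2:ℝ)⁻¹ < 1 := by norm_num
    linarith
  have hsv' : slope F 0 (-δ) = (A - A * (1-δ) ^ (a+1)) * δ⁻¹ := by
    rw [slope_def_field]
    have h10 : (1:ℝ) + -δ = 1 - δ := by ring
    simp only [hFdef, h10, Real.one_rpow, add_zero, sub_zero, mul_one]
    rw [div_eq_iff (by intro h; apply ne_of_gt hδ0; linarith [neg_eq_zero.1 h] : (-δ : ℝ) ≠ 0)]
    field_simp
    ring
  have hQ'lim : Tendsto Q' atTop (nhds (slope F 0 (-δ))) := by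
    rw [hsv']
    have t1' : Tendsto (fun n : ℕ => S (m' n) / (m' n : ℝ) ^ (a+1)) atTop (nhds A) :=
      hS.comp hm'top
    have t2' : Tendsto (fun n : ℕ => ((m' n : ℝ) / n) ^ (a+1)) atTop
        (nhds ((1-δ) ^ (a+1))) := hm'n.rpow_const (Or.inl (ne_of_gt hδ1))
    have main := (hS.sub (t1'.mul t2')).mul t3
    apply main.congr'
    filter_upwards [Ev, eventually_ge_atTop 1] with n hEv hn
    have hn0 : (0:ℝ) < (n:ℝ) := by exact_mod_cast hn
    have hm0 : (0:ℝ) < (m' n : ℝ) := by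
      have := hm'ge n hEv.1
      linarith [hEv.2]
    have hk0 : (0:ℝ) < (k n : ℝ) := by exact_mod_cast hk1 n hn
    have hdiv : ((m' n : ℝ) / n) ^ (a+1) = (m' n : ℝ) ^ (a+1) / (n:ℝ) ^ (a+1) :=
      Real.div_rpow hm0.le hn0.le _
    have hna1 : (n:ℝ) ^ (a+1) = (n:ℝ) ^ a * n := by
      rw [Real.rpow_add_one (ne_of_gt hn0)]
    have hma : (0:ℝ) < (m' n : ℝ) ^ (a+1) := by positivity
    have hna : (0:ℝ) < (n:ℝ) ^ a := by positivity
    have e1 : S (m' n) / (m' n:ℝ)^(a+1) * ((m' n:ℝ)^(a+1)/(n:ℝ)^(a+1))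
        = S (m' n) / (n:ℝ)^(a+1) := by
      field_simp
    rw [hdiv, hQ'def, e1, div_sub_div_same, hna1]
    have hk0' : (k n : ℝ) ≠ 0 := ne_of_gt hk0
    field_simp
    ring
  have hlower : ∀ᶠ n in atTop, L - ε < lam n / (n:ℝ) ^ a := by
    have := hQ'lim
    rw [Metric.tendsto_atTop] at this
    obtain ⟨N₁, hN₁⟩ := this (ε/2) (by linarith)
    filter_upwards [hQ'ge, eventually_ge_atTop N₁] with n h1 h2
    have := hN₁ n h2
    rw [Real.dist_eq, abs_sub_lt_iff] at this
    rw [abs_sub_lt_iff] at h2δ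
    linarith [this.1, this.2, h2δ.1, h2δ.2, h1]
  rw [← eventually_atTop]
  filter_upwards [hupper, hlower] with n h1 h2
  rw [Real.dist_eq, abs_sub_lt_iff]
  constructor <;> linarith

end helpers

open Real in
set_option maxHeartbeats 2000000 in
theorem asymptotics_sum_to_riesz (lam : ℕ → ℝ) (A B C D a b : ℝ)
    (hA : 0 < A) (hC : 0 < C) (hmono : Monotone lam)
    (ha : -1 < a - 1) (hab : a - 1 < b) (hba : b < a)
    (hCdef : C = A ^ (-(1 / a)) * a * (a + 1) ^ (-((1 + a) / a)))
    (hDdef : D = B * (A * (a + 1)) ^ (-((1 + b) / a)))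
    (hyp : Tendsto
      (fun N : ℕ =>
        ((∑ k ∈ Finset.range N, lam k) - A * (N : ℝ) ^ (a + 1)) / (N : ℝ) ^ (b + 1))
      atTop (nhds B)) :
    Tendsto
      (fun Λ : ℝ =>
        ((∑' k : ℕ, max (Λ - lam k) 0) - C * Λ ^ ((1 + a) / a)) / Λ ^ ((1 + b) / a))
      atTop (nhds (-D)) := by
  have ha0 : 0 < a := by linarith
  have ha1 : (0:ℝ) < a + 1 := by linarith
  have hb1 : (0:ℝ) < b + 1 := by linarith
  set S : ℕ → ℝ := fun n => ∑ k ∈ Finset.range n, lam k with hSdef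
  have hS := Sdiv_tendsto lam A B a b hba hyp
  have hr := lam_ratio_tendsto lam A B a b hA ha0 hba hmono hyp
  set L : ℝ := A * (a + 1) with hLdef
  have hL0 : 0 < L := by positivity
  set e : ℕ → ℝ := fun n => (S n - A * (n:ℝ) ^ (a+1)) / (n:ℝ) ^ (b+1) - B with hedef
  have he : Tendsto e atTop (nhds 0) := by
    have := hyp.sub_const B
    simpa using this
  have hSe : ∀ n : ℕ, 1 ≤ n → S n = A * (n:ℝ) ^ (a+1) + (B + e n) * (n:ℝ) ^ (b+1) := by
    intro n hn
    have hn0 : (0:ℝ) < (n:ℝ) := by exact_mod_cast hn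
    have hb0 : (0:ℝ) < (n:ℝ) ^ (b+1) := by positivity
    rw [hedef]
    field_simp
    ring
  -- lam tends to atTop
  have hlamtop : Tendsto lam atTop atTop := by
    have h1 : Tendsto (fun n : ℕ => (L/2) * (n:ℝ) ^ a) atTop atTop :=
      Tendsto.const_mul_atTop (by linarith)
        ((tendsto_rpow_atTop ha0).comp tendsto_natCast_atTop_atTop)
    apply tendsto_atTop_mono' atTop _ h1
    filter_upwards [hr.eventually (eventually_gt_nhds (by linarith : L/2 < L)),
      eventually_ge_atTop 1] with n h2 hn
    have hn0 : (0:ℝ) < (n:ℝ) := by exact_mod_cast hn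
    have hna : (0:ℝ) < (n:ℝ) ^ a := by positivity
    rw [lt_div_iff₀ hna] at h2
    linarith
  -- gamma
  set γ : ℝ := L ^ (-(1/a)) with hγdef
  have hγ0 : 0 < γ := Real.rpow_pos_of_pos hL0 _
  have hγa : γ ^ a = L⁻¹ := by
    rw [hγdef, ← Real.rpow_mul hL0.le, show -(1/a) * a = -1 by field_simp]
    exact Real.rpow_neg_one L
  -- N star
  set NS : ℝ → ℝ := fun Λ => γ * Λ ^ (1/a) with hNSdef
  have hNS0 : ∀ Λ : ℝ, 0 < Λ → 0 < NS Λ := by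
    intro Λ hΛ
    have : (0:ℝ) < Λ ^ (1/a) := Real.rpow_pos_of_pos hΛ _
    positivity
  have hNSa : ∀ Λ : ℝ, 0 < Λ → L * NS Λ ^ a = Λ := by
    intro Λ hΛ
    rw [hNSdef]
    rw [Real.mul_rpow hγ0.le (Real.rpow_pos_of_pos hΛ _).le, hγa,
      ← Real.rpow_mul hΛ.le, show 1/a * a = 1 by field_simp, Real.rpow_one]
    field_simp
  have hNStop : Tendsto NS atTop atTop :=
    Tendsto.const_mul_atTop hγ0 (tendsto_rpow_atTop (by positivity))
  -- C and D in terms of gamma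
  have hCγ : C = γ * a / (a + 1) := by
    rw [hCdef, hγdef, hLdef, Real.mul_rpow hA.le ha1.le,
      show -((1+a)/a) = -(1/a) + -1 by field_simp; ring,
      Real.rpow_add ha1, Real.rpow_neg_one]
    field_simp
  have hDγ : D = B * γ ^ (b + 1) := by
    rw [hDdef, hγdef, ← Real.rpow_mul hL0.le,
      show -(1/a) * (b+1) = -((1+b)/a) by field_simp; ring]
  -- value at the maximum
  have hΛpow : ∀ Λ : ℝ, 0 < Λ → Λ ^ (1/a) * Λ = Λ ^ ((1+a)/a) := by
    intro Λ hΛ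
    rw [show (1+a)/a = 1/a + 1 by field_simp, Real.rpow_add hΛ, Real.rpow_one]
  have hCh : ∀ Λ : ℝ, 0 < Λ → NS Λ * Λ - A * NS Λ ^ (a+1) = C * Λ ^ ((1+a)/a) := by
    intro Λ hΛ
    have hN0 := hNS0 Λ hΛ
    have h1 : NS Λ ^ (a+1) = NS Λ ^ a * NS Λ := by
      rw [Real.rpow_add_one (ne_of_gt hN0)]
    have h2 : A * NS Λ ^ a = Λ / (a+1) := by
      have := hNSa Λ hΛ
      rw [hLdef] at this
      field_simp
      nlinarith
    rw [h1, ← mul_assoc, h2, ← hΛpow Λ hΛ, hNSdef, hCγ]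
    field_simp
    ring
  -- global maximum inequality
  have hmax : ∀ Λ : ℝ, 0 < Λ → ∀ x : ℝ, 0 ≤ x →
      x * Λ - A * x ^ (a+1) ≤ C * Λ ^ ((1+a)/a) := by
    intro Λ hΛ x hx
    rw [← hCh Λ hΛ]
    have hN0 := hNS0 Λ hΛ
    have htan := rpow_tangent_le (p := a+1) (N := NS Λ) (x := x) (by linarith) hN0 hx
    rw [show a + 1 - 1 = a by ring] at htan
    have hAa : A * ((a+1) * NS Λ ^ a) = Λ := by
      have := hNSa Λ hΛ
      rw [hLdef] at this
      linarith [this]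
    nlinarith [mul_le_mul_of_nonneg_left htan hA.le]
  -- counting function
  have hex : ∀ Λ : ℝ, ∃ n, Λ ≤ lam n := fun Λ => (hlamtop.eventually_ge_atTop Λ).exists
  set Nc : ℝ → ℕ := fun Λ => sInf {n | Λ ≤ lam n} with hNcdef
  have hNcmem : ∀ Λ : ℝ, Λ ≤ lam (Nc Λ) := fun Λ => Nat.sInf_mem (hex Λ)
  have hNclt : ∀ Λ : ℝ, ∀ j, j < Nc Λ → lam j < Λ := by
    intro Λ j hj
    by_contra h
    push_neg at h
    exact absurd (Nat.sInf_le h) (not_le.2 hj)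
  have hNctop : Tendsto Nc atTop atTop := by
    rw [tendsto_atTop]
    intro n
    filter_upwards [eventually_gt_atTop (lam n)] with Λ hΛ
    by_contra h
    push_neg at h
    have h1 : lam (Nc Λ) ≤ lam n := hmono (le_of_lt h)
    linarith [hNcmem Λ]
  -- the Riesz mean
  set G : ℝ → ℝ := fun Λ => ∑' k : ℕ, max (Λ - lam k) 0 with hGdef
  have hGeq : ∀ Λ : ℝ, G Λ = (Nc Λ : ℝ) * Λ - S (Nc Λ) := by
    intro Λ
    have hzero : ∀ j ∉ Finset.range (Nc Λ), max (Λ - lam j) 0 = 0 := by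
      intro j hj
      rw [Finset.mem_range, not_lt] at hj
      have h1 : Λ ≤ lam j := le_trans (hNcmem Λ) (hmono hj)
      simp [max_eq_right, sub_nonpos.2 h1]
    rw [hGdef]
    simp only
    rw [tsum_eq_sum hzero, Finset.sum_congr rfl (fun j hj => max_eq_left
      (by linarith [hNclt Λ j (Finset.mem_range.1 hj)] : (0:ℝ) ≤ Λ - lam j)),
      Finset.sum_sub_distrib, Finset.sum_const, Finset.card_range, nsmul_eq_mul, hSdef]
  have hGge : ∀ Λ : ℝ, ∀ M : ℕ, (M:ℝ) * Λ - S M ≤ G Λ := by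
    intro Λ M
    rw [hGeq Λ]
    rcases le_total M (Nc Λ) with h | h
    · have hsum : S (Nc Λ) - S M ≤ ((Nc Λ - M : ℕ):ℝ) * Λ := by
        have h2 := Finset.sum_le_card_nsmul (Finset.Ico M (Nc Λ)) lam Λ
          (fun i hi => le_of_lt (hNclt Λ i (Finset.mem_Ico.1 hi).2))
        rwa [Nat.card_Ico, nsmul_eq_mul, Finset.sum_Ico_eq_sub lam h] at h2
      have hcast : ((Nc Λ - M : ℕ):ℝ) = (Nc Λ:ℝ) - M := Nat.cast_sub h
      rw [hcast] at hsum
      linarith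
    · have hsum : ((M - Nc Λ : ℕ):ℝ) * Λ ≤ S M - S (Nc Λ) := by
        have h2 := Finset.card_nsmul_le_sum (Finset.Ico (Nc Λ) M) lam Λ
          (fun i hi => le_trans (hNcmem Λ) (hmono (Finset.mem_Ico.1 hi).1))
        rwa [Nat.card_Ico, nsmul_eq_mul, Finset.sum_Ico_eq_sub lam h] at h2
      have hcast : ((M - Nc Λ : ℕ):ℝ) = (M:ℝ) - Nc Λ := Nat.cast_sub h
      rw [hcast] at hsum
      linarith
  -- Nc asymptotics
  have hNc1top : Tendsto (fun Λ => Nc Λ - 1) atTop atTop := by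
    rw [tendsto_atTop]
    intro n
    filter_upwards [hNctop.eventually_ge_atTop (n+1)] with Λ h
    omega
  have rNc : Tendsto (fun Λ => lam (Nc Λ) / (Nc Λ:ℝ) ^ a) atTop (nhds L) := hr.comp hNctop
  have rNc1 : Tendsto (fun Λ => lam (Nc Λ - 1) / ((Nc Λ - 1 : ℕ):ℝ) ^ a) atTop (nhds L) :=
    hr.comp hNc1top
  have evΛ : ∀ᶠ Λ : ℝ in atTop, 0 < Λ := eventually_gt_atTop 0
  have evNc2 : ∀ᶠ Λ : ℝ in atTop, 2 ≤ Nc Λ := hNctop.eventually_ge_atTop 2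
  have evlam1 : ∀ᶠ Λ : ℝ in atTop, 0 < lam (Nc Λ - 1) := by
    filter_upwards [rNc1.eventually (eventually_gt_nhds (by linarith : L/2 < L)),
      evNc2] with Λ h1 h2
    have hge : (1:ℝ) ≤ ((Nc Λ - 1 : ℕ):ℝ) := by
      have : 1 ≤ Nc Λ - 1 := by omega
      exact_mod_cast this
    have hpos : (0:ℝ) < ((Nc Λ - 1 : ℕ):ℝ) ^ a := by positivity
    rw [lt_div_iff₀ hpos] at h1
    nlinarith
  have hxq : Tendsto (fun x : ℝ => x / (x - 1)) atTop (nhds 1) := by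
    have h1 : Tendsto (fun x : ℝ => 1 + (x - 1)⁻¹) atTop (nhds (1 + 0)) :=
      tendsto_const_nhds.add
        (tendsto_inv_atTop_zero.comp (tendsto_atTop_add_const_right _ (-1) tendsto_id))
    rw [add_zero] at h1
    apply h1.congr'
    filter_upwards [eventually_ge_atTop 2] with x hx
    have hne : x - 1 ≠ 0 := by intro h; rw [sub_eq_zero] at h; linarith
    field_simp
    ring
  have hNcR : Tendsto (fun Λ => (Nc Λ : ℝ)) atTop atTop :=
    tendsto_natCast_atTop_atTop.comp hNctop
  have hq : Tendsto (fun Λ => (Nc Λ:ℝ) / ((Nc Λ:ℝ) - 1)) atTop (nhds 1) := hxq.comp hNcR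
  have hz : Tendsto (fun Λ => lam (Nc Λ) / lam (Nc Λ - 1)) atTop (nhds 1) := by
    have hmain := (rNc.div rNc1 (ne_of_gt hL0)).mul (hq.rpow_const (Or.inr ha0.le))
    rw [div_self (ne_of_gt hL0), Real.one_rpow, mul_one] at hmain
    apply hmain.congr'
    filter_upwards [evNc2, evlam1] with Λ h2 hl1
    have hc : ((Nc Λ - 1 : ℕ):ℝ) = (Nc Λ:ℝ) - 1 := by
      have h1 : 1 ≤ Nc Λ := by omega
      push_cast [Nat.cast_sub h1]
      ring
    have h1' : (1:ℝ) ≤ (Nc Λ:ℝ) - 1 := by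
      rw [← hc]
      have : 1 ≤ Nc Λ - 1 := by omega
      exact_mod_cast this
    have hNcp : (0:ℝ) < (Nc Λ:ℝ) := by
      have : (0:ℕ) < Nc Λ := by omega
      exact_mod_cast this
    simp only [Pi.div_apply]
    rw [hc, Real.div_rpow hNcp.le (by linarith : (0:ℝ) ≤ (Nc Λ:ℝ) - 1)]
    have p1 : (0:ℝ) < ((Nc Λ:ℝ) - 1) ^ a := by positivity
    have p2 : (0:ℝ) < (Nc Λ:ℝ) ^ a := by positivity
    field_simp
  have hv : Tendsto (fun Λ => lam (Nc Λ) / Λ) atTop (nhds 1) := by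
    apply tendsto_of_tendsto_of_tendsto_of_le_of_le' tendsto_const_nhds hz
    · filter_upwards [evΛ] with Λ hΛ
      rw [le_div_iff₀ hΛ, one_mul]
      exact hNcmem Λ
    · filter_upwards [evΛ, evlam1, evNc2] with Λ hΛ hl1 h2
      have hlow : lam (Nc Λ - 1) < Λ := hNclt Λ (Nc Λ - 1) (by omega)
      have hup : Λ ≤ lam (Nc Λ) := hNcmem Λ
      rw [div_le_div_iff₀ hΛ hl1]
      nlinarith
  have hu : Tendsto (fun Λ => lam (Nc Λ) / (L * (Nc Λ:ℝ) ^ a)) atTop (nhds 1) := by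
    have hmain := rNc.div_const L
    rw [div_self (ne_of_gt hL0)] at hmain
    apply hmain.congr
    intro Λ
    rw [div_div, mul_comm]
  have hw : Tendsto (fun Λ => L * (Nc Λ:ℝ) ^ a / Λ) atTop (nhds 1) := by
    have hmain : Tendsto (fun Λ => (lam (Nc Λ) / Λ) / (lam (Nc Λ) / (L * (Nc Λ:ℝ) ^ a)))
        atTop (nhds 1) := by
      have := hv.div hu one_ne_zero
      rw [div_one] at this
      exact this
    apply hmain.congr'
    filter_upwards [evΛ, evNc2] with Λ hΛ h2
    have hlampos : 0 < lam (Nc Λ) := lt_of_lt_of_le hΛ (hNcmem Λ)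
    have hNcp : (0:ℝ) < (Nc Λ:ℝ) := by
      have : (0:ℕ) < Nc Λ := by omega
      exact_mod_cast this
    have hp : (0:ℝ) < (Nc Λ:ℝ) ^ a := by positivity
    field_simp
  have hρ : Tendsto (fun Λ => (Nc Λ:ℝ) / NS Λ) atTop (nhds 1) := by
    have hmain := hw.rpow_const (Or.inr (by positivity : (0:ℝ) ≤ 1/a))
    rw [Real.one_rpow] at hmain
    apply hmain.congr'
    filter_upwards [evΛ, evNc2] with Λ hΛ h2
    have hNcp : (0:ℝ) < (Nc Λ:ℝ) := by
      have : (0:ℕ) < Nc Λ := by omega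
      exact_mod_cast this
    have e1 : (L * (Nc Λ:ℝ) ^ a / Λ) ^ (1/a)
        = L ^ (1/a) * (Nc Λ:ℝ) / Λ ^ (1/a) := by
      rw [Real.div_rpow (by positivity) hΛ.le, Real.mul_rpow hL0.le (by positivity),
        ← Real.rpow_mul hNcp.le, show a * (1/a) = 1 by field_simp, Real.rpow_one]
    have hγinv : γ = (L ^ (1/a))⁻¹ := by
      rw [hγdef, ← Real.rpow_neg_one (L ^ (1/a)), ← Real.rpow_mul hL0.le]
      norm_num
    have hLp : (0:ℝ) < L ^ (1/a) := Real.rpow_pos_of_pos hL0 _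
    have hΛp : (0:ℝ) < Λ ^ (1/a) := Real.rpow_pos_of_pos hΛ _
    simp only [e1, hNSdef, hγinv]
    field_simp
  -- ceiling of NS
  set M : ℝ → ℕ := fun Λ => ⌈NS Λ⌉₊ with hMdef
  have evNS1 : ∀ᶠ Λ : ℝ in atTop, 1 ≤ NS Λ := hNStop.eventually_ge_atTop 1
  have hMtop : Tendsto M atTop atTop := by
    rw [tendsto_atTop]
    intro n
    filter_upwards [hNStop.eventually_ge_atTop (n:ℝ)] with Λ h
    have h2 : (n:ℝ) ≤ (M Λ : ℝ) := le_trans h (Nat.le_ceil (NS Λ))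
    exact_mod_cast h2
  have hMratio : Tendsto (fun Λ => (M Λ:ℝ) / NS Λ) atTop (nhds 1) := by
    have hup : Tendsto (fun Λ => 1 + (NS Λ)⁻¹) atTop (nhds (1 + 0)) :=
      tendsto_const_nhds.add (tendsto_inv_atTop_zero.comp hNStop)
    rw [add_zero] at hup
    apply tendsto_of_tendsto_of_tendsto_of_le_of_le' tendsto_const_nhds hup
    · filter_upwards [evNS1] with Λ h1
      have hNSp : 0 < NS Λ := by linarith
      rw [le_div_iff₀ hNSp, one_mul]
      exact Nat.le_ceil _
    · filter_upwards [evNS1] with Λ h1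
      have hNSp : 0 < NS Λ := by linarith
      rw [div_le_iff₀ hNSp]
      have h2 : (M Λ : ℝ) ≤ NS Λ + 1 := (Nat.ceil_lt_add_one (by linarith)).le
      calc (M Λ : ℝ) ≤ NS Λ + 1 := h2
        _ = (1 + (NS Λ)⁻¹) * NS Λ := by field_simp
  -- generic second-order term limit
  have hgen : ∀ ψ : ℝ → ℕ, Tendsto ψ atTop atTop →
      Tendsto (fun Λ => (ψ Λ:ℝ) / NS Λ) atTop (nhds 1) →
      Tendsto (fun Λ => (B + e (ψ Λ)) * (ψ Λ:ℝ) ^ (b+1) / Λ ^ ((1+b)/a))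
        atTop (nhds (B * γ ^ (b+1))) := by
    intro ψ hψtop hψratio
    have h1 : Tendsto (fun Λ => B + e (ψ Λ)) atTop (nhds (B + 0)) :=
      tendsto_const_nhds.add (he.comp hψtop)
    rw [add_zero] at h1
    have h2 : Tendsto (fun Λ => ((ψ Λ:ℝ)/NS Λ) ^ (b+1) * γ ^ (b+1)) atTop
        (nhds ((1:ℝ) ^ (b+1) * γ ^ (b+1))) :=
      (hψratio.rpow_const (Or.inr hb1.le)).mul_const _
    rw [Real.one_rpow, one_mul] at h2
    have hmain := h1.mul h2
    apply hmain.congr'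
    filter_upwards [evΛ, hψtop.eventually_ge_atTop 1, evNS1] with Λ hΛ hψ1 hNS1
    have hψp : (0:ℝ) < (ψ Λ:ℝ) := by exact_mod_cast hψ1
    have hNSp : 0 < NS Λ := by linarith
    have e2 : ((ψ Λ:ℝ)/NS Λ) ^ (b+1) = (ψ Λ:ℝ) ^ (b+1) / (NS Λ) ^ (b+1) :=
      Real.div_rpow hψp.le hNSp.le _
    have e3 : (NS Λ) ^ (b+1) = γ ^ (b+1) * Λ ^ ((1+b)/a) := by
      simp only [hNSdef]
      rw [Real.mul_rpow hγ0.le (Real.rpow_pos_of_pos hΛ _).le, ← Real.rpow_mul hΛ.le,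
        show 1/a * (b+1) = (1+b)/a by rw [one_div, inv_mul_eq_div, add_comm b 1]]
    have p1 : (0:ℝ) < γ ^ (b+1) := Real.rpow_pos_of_pos hγ0 _
    have p2 : (0:ℝ) < Λ ^ ((1+b)/a) := Real.rpow_pos_of_pos hΛ _
    rw [e2, e3]
    field_simp
  -- first-order term at the ceiling point
  have hM0 : Tendsto (fun Λ => ((M Λ:ℝ) * Λ - A * (M Λ:ℝ) ^ (a+1) - C * Λ ^ ((1+a)/a))
      / Λ ^ ((1+b)/a)) atTop (nhds 0) := by
    set K : ℝ := A * (a+1) * (a * Real.exp a) with hKdef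
    have hK0 : 0 < K := by positivity
    have hWlim : Tendsto (fun Λ => -(K * (NS Λ) ^ (a-1) / Λ ^ ((1+b)/a))) atTop (nhds 0) := by
      have hexp : (0:ℝ) < (b + 2 - a)/a := div_pos (by linarith) ha0
      have h5 : Tendsto (fun Λ : ℝ => Λ ^ (-((b+2-a)/a))) atTop (nhds 0) :=
        tendsto_rpow_neg_atTop hexp
      have h6 := (h5.const_mul (K * γ ^ (a-1))).neg
      rw [mul_zero, neg_zero] at h6
      apply h6.congr'
      filter_upwards [evΛ] with Λ hΛ
      have hΛ1 : (0:ℝ) < Λ ^ (1/a) := Real.rpow_pos_of_pos hΛ _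
      have e4 : (NS Λ) ^ (a-1) = γ ^ (a-1) * Λ ^ ((a-1) * (1/a)) := by
        simp only [hNSdef]
        rw [Real.mul_rpow hγ0.le hΛ1.le, ← Real.rpow_mul hΛ.le, mul_comm (1/a) (a-1)]
      rw [e4]
      rw [show -((b+2-a)/a) = (a-1) * (1/a) - (1+b)/a by field_simp; ring,
        Real.rpow_sub hΛ]
      ring
    apply tendsto_of_tendsto_of_tendsto_of_le_of_le' hWlim tendsto_const_nhds
    · -- lower bound
      filter_upwards [evΛ, evNS1] with Λ hΛ hNS1
      have hqpos : (0:ℝ) < Λ ^ ((1+b)/a) := Real.rpow_pos_of_pos hΛ _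
      have hN0 : 0 < NS Λ := by linarith
      set x : ℝ := (M Λ : ℝ) with hxdef
      have hx1 : NS Λ ≤ x := Nat.le_ceil _
      have hx2 : x ≤ NS Λ + 1 := (Nat.ceil_lt_add_one (by linarith)).le
      have hxp : 0 < x := by linarith
      -- tangent at x
      have htan := rpow_tangent_le (p := a+1) (N := x) (x := NS Λ) (by linarith) hxp hN0.le
      rw [show a + 1 - 1 = a by ring] at htan
      -- x^a bound
      have hxa : x ^ a ≤ (NS Λ) ^ a + a * Real.exp a * (NS Λ) ^ (a-1) := by
        have h7 := rpow_add_one_le (N := NS Λ) (θ := x - NS Λ) (p := a) hNS1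
          (by linarith) (by linarith) ha0
        rw [show NS Λ + (x - NS Λ) = x by ring] at h7
        exact h7
      have hxaN : (NS Λ) ^ a ≤ x ^ a := Real.rpow_le_rpow hN0.le hx1 ha0.le
      have hLN : L * (NS Λ) ^ a = Λ := hNSa Λ hΛ
      have hchv := hCh Λ hΛ
      -- C Λ^p - (xΛ - A x^{a+1}) ≤ K (NS Λ)^{a-1}
      have hkey : C * Λ ^ ((1+a)/a) - (x * Λ - A * x ^ (a+1)) ≤ K * (NS Λ) ^ (a-1) := by
        have hfrom : C * Λ ^ ((1+a)/a) - (x * Λ - A * x ^ (a+1))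
            = A * (x ^ (a+1) - (NS Λ) ^ (a+1)) - Λ * (x - NS Λ) := by
          rw [← hchv]; ring
        rw [hfrom, hKdef]
        have c0 : Λ * (x - NS Λ) = A * (a+1) * NS Λ ^ a * (x - NS Λ) := by
          have h := hNSa Λ hΛ
          rw [hLdef] at h
          linear_combination (x - NS Λ) * h.symm
        have h8 : x ^ (a+1) - (NS Λ) ^ (a+1) ≤ (a+1) * x ^ a * (x - NS Λ) := by
          nlinarith [htan]
        have hNSa1 : (0:ℝ) ≤ (NS Λ) ^ (a-1) := (Real.rpow_pos_of_pos hN0 _).le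
        have hθ1 : x - NS Λ ≤ 1 := by linarith
        have hθ0 : 0 ≤ x - NS Λ := by linarith
        have h9 : x ^ a - (NS Λ) ^ a ≤ a * Real.exp a * (NS Λ) ^ (a-1) := by linarith
        have c1 := mul_le_mul_of_nonneg_left h8 hA.le
        have c2 := mul_le_mul_of_nonneg_right h9
          (mul_nonneg (mul_nonneg hA.le ha1.le) hθ0)
        have c3 := mul_le_mul_of_nonneg_left hθ1
          (by positivity : (0:ℝ) ≤ A * (a+1) * (a * Real.exp a) * (NS Λ) ^ (a-1))
        nlinarith [c0, c1, c2, c3]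
      rw [← neg_div]
      exact (div_le_div_iff_of_pos_right hqpos).2 (by linarith)
    · -- upper bound
      filter_upwards [evΛ] with Λ hΛ
      have hqpos : (0:ℝ) < Λ ^ ((1+b)/a) := Real.rpow_pos_of_pos hΛ _
      apply div_nonpos_of_nonpos_of_nonneg _ hqpos.le
      have := hmax Λ hΛ (M Λ : ℝ) (by positivity)
      linarith
  -- assembly
  have hUpper : ∀ᶠ Λ in atTop,
      (G Λ - C * Λ ^ ((1+a)/a)) / Λ ^ ((1+b)/a)
        ≤ -((B + e (Nc Λ)) * (Nc Λ:ℝ) ^ (b+1) / Λ ^ ((1+b)/a)) := by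
    filter_upwards [evΛ, evNc2] with Λ hΛ h2
    have hNc1 : 1 ≤ Nc Λ := by omega
    have hqpos : (0:ℝ) < Λ ^ ((1+b)/a) := Real.rpow_pos_of_pos hΛ _
    have h3 : G Λ = (Nc Λ:ℝ) * Λ - A * (Nc Λ:ℝ)^(a+1) - (B + e (Nc Λ)) * (Nc Λ:ℝ)^(b+1) := by
      rw [hGeq Λ, hSe (Nc Λ) hNc1]; ring
    have h4 : (Nc Λ:ℝ) * Λ - A * (Nc Λ:ℝ)^(a+1) ≤ C * Λ ^ ((1+a)/a) :=
      hmax Λ hΛ _ (by positivity)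
    rw [h3, ← neg_div]
    exact (div_le_div_iff_of_pos_right hqpos).2 (by linarith)
  have hULim : Tendsto (fun Λ => -((B + e (Nc Λ)) * (Nc Λ:ℝ) ^ (b+1) / Λ ^ ((1+b)/a)))
      atTop (nhds (-D)) := by
    rw [hDγ]
    exact (hgen Nc hNctop hρ).neg
  have hLower : ∀ᶠ Λ in atTop,
      ((M Λ:ℝ) * Λ - A * (M Λ:ℝ)^(a+1) - C * Λ ^ ((1+a)/a)) / Λ ^ ((1+b)/a)
        - (B + e (M Λ)) * (M Λ:ℝ) ^ (b+1) / Λ ^ ((1+b)/a)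
        ≤ (G Λ - C * Λ ^ ((1+a)/a)) / Λ ^ ((1+b)/a) := by
    filter_upwards [evΛ, hMtop.eventually_ge_atTop 1] with Λ hΛ hM1
    have hqpos : (0:ℝ) < Λ ^ ((1+b)/a) := Real.rpow_pos_of_pos hΛ _
    have h3 : (M Λ:ℝ) * Λ - S (M Λ) ≤ G Λ := hGge Λ (M Λ)
    have h4 := hSe (M Λ) hM1
    rw [div_sub_div_same]
    apply (div_le_div_iff_of_pos_right hqpos).2
    have h5 : (M Λ:ℝ)*Λ - A*(M Λ:ℝ)^(a+1) - C*Λ^((1+a)/a) - (B + e (M Λ))*(M Λ:ℝ)^(b+1)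
        = ((M Λ:ℝ)*Λ - S (M Λ)) - C*Λ^((1+a)/a) := by
      rw [h4]; ring
    rw [h5]
    linarith
  have hLLim : Tendsto (fun Λ =>
      ((M Λ:ℝ) * Λ - A * (M Λ:ℝ)^(a+1) - C * Λ ^ ((1+a)/a)) / Λ ^ ((1+b)/a)
        - (B + e (M Λ)) * (M Λ:ℝ) ^ (b+1) / Λ ^ ((1+b)/a)) atTop (nhds (-D)) := by
    have h6 := hM0.sub (hgen M hMtop hMratio)
    rw [zero_sub, ← hDγ] at h6
    exact h6
  exact tendsto_of_tendsto_of_tendsto_of_le_of_le' hLLim hULim hLower hUpper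
end
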